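/- Let T be an 𝔏-theory, L an 𝔏-fragment, and (ρₙ)ₙ a sequence of sentences with ρₙ, ¬ρₙ ∈ L for all n. Write Σ = T^⊢ ∩ L, Σ₀ = (Σ ∪ {ρₙ : n})^⊢ ∩ L, Σₙ = (Σ ∪ {ρ₁,…,ρₙ₋₁,¬ρₙ})^⊢ ∩ L, and Σ_{>0} = ⋂_{n≥1} Σₙ. Then Σ = Σ₀ ∩ Σ_{>0}. -/
import Mathlib


open FirstOrder Set

universe u v w u₁ v₁ u₂ v₂

namespace PaperStmt

/-- An `𝔏`-fragment: a set of `𝔏`-sentences containing `⊤` and `⊥` and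
closed under `∧` and `∨`. -/
def IsFragment {L : FirstOrder.Language.{u, v}} (F : Set L.Sentence) : Prop :=
  (⊤ : L.Sentence) ∈ F ∧ (⊥ : L.Sentence) ∈ F ∧
    ∀ φ ψ : L.Sentence, φ ∈ F → ψ ∈ F → (φ ⊓ ψ) ∈ F ∧ (φ ⊔ ψ) ∈ F

/-- `T_F = T^⊢ ∩ F`: the consequences of the theory `T` that lie in the fragment `F`. -/
def cons {L : FirstOrder.Language.{u, v}} (T : L.Theory) (F : Set L.Sentence) :
    Set L.Sentence :=
  {φ | φ ∈ F ∧ T ⊨ᵇ φ}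

/-- Bundled models of `T` (in the universe matching semantic consequence `⊨ᵇ`). -/
abbrev Mod {L : FirstOrder.Language.{u, v}} (T : L.Theory) : Type (max u v + 1) :=
  FirstOrder.Language.Theory.ModelType.{u, v, max u v} T

/-- `Th_F(M)`: the sentences in the fragment `F` true in the model `M`. -/
def th {L : FirstOrder.Language.{u, v}} {T : L.Theory} (F : Set L.Sentence) (M : Mod T) :
    Set L.Sentence :=
  {φ | φ ∈ F ∧ M ⊨ φ}

/-- write `Σ = T^⊢ ∩ F`, `Σ₀ = (Σ ∪ {ρₙ : n ≥ 1})^⊢ ∩ F`,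
`Σₙ = (Σ ∪ {ρ₁,…,ρₙ₋₁,¬ρₙ})^⊢ ∩ F` and `Σ_{>0} = ⋂_{n≥1} Σₙ`.
Then `Σ = Σ₀ ∩ Σ_{>0}`. -/
theorem statement_12 {L : FirstOrder.Language.{u, v}} (T : L.Theory) (F : Set L.Sentence)
    (hF : IsFragment F) (ρ : ℕ → L.Sentence)
    (hρ : ∀ n : ℕ, 1 ≤ n → ρ n ∈ F ∧ (∼(ρ n)) ∈ F) :
    cons T F =
      cons (cons T F ∪ ρ '' {k | 1 ≤ k}) F ∩
        ⋂ n ∈ {n : ℕ | 1 ≤ n}, cons (cons T F ∪ (ρ '' {k | 1 ≤ k ∧ k < n}) ∪ {∼(ρ n)}) F := by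
  ext φ
  simp only [Set.mem_inter_iff, Set.mem_iInter, Set.mem_setOf_eq]
  constructor
  · intro hφ
    exact ⟨⟨hφ.1, Language.Theory.models_sentence_of_mem (Set.mem_union_left _ hφ)⟩,
      fun n _ => ⟨hφ.1, Language.Theory.models_sentence_of_mem
        (Set.mem_union_left _ (Set.mem_union_left _ hφ))⟩⟩
  · rintro ⟨⟨hF0, h0⟩, hn⟩
    refine ⟨hF0, ?_⟩
    rw [Language.Theory.models_sentence_iff]
    intro M
    have hMS : M ⊨ (cons T F : L.Theory) := by
      refine ⟨fun ψ hψ => ?_⟩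
      exact Language.Theory.models_sentence_iff.mp hψ.2 M
    by_cases hall : ∀ k : ℕ, 1 ≤ k → M ⊨ ρ k
    · haveI hM : M ⊨ (cons T F ∪ ρ '' {k | 1 ≤ k} : L.Theory) := by
        rw [Language.Theory.model_union_iff]
        refine ⟨hMS, ⟨?_⟩⟩
        rintro ψ ⟨k, hk, rfl⟩
        exact hall k hk
      exact Language.Theory.models_sentence_iff.mp h0
        (Language.Theory.ModelType.of _ M)
    · push_neg at hall
      haveI := Classical.decPred fun k : ℕ => 1 ≤ k ∧ ¬ M ⊨ ρ k
      have hex : ∃ k : ℕ, 1 ≤ k ∧ ¬ M ⊨ ρ k := hall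
      set n := Nat.find hex with hndef
      obtain ⟨hn1, hnρ⟩ := Nat.find_spec hex
      have hmin : ∀ m : ℕ, m < n → 1 ≤ m → M ⊨ ρ m := by
        intro m hm h1
        by_contra hc
        exact Nat.find_min hex hm ⟨h1, hc⟩
      haveI hM : M ⊨ (cons T F ∪ ρ '' {k | 1 ≤ k ∧ k < n} ∪ {∼(ρ n)} : L.Theory) := by
        rw [Language.Theory.model_union_iff, Language.Theory.model_union_iff]
        refine ⟨⟨hMS, ⟨?_⟩⟩, ⟨?_⟩⟩
        · rintro ψ ⟨k, ⟨hk1, hk2⟩, rfl⟩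
          exact hmin k hk2 hk1
        · rintro ψ rfl
          simpa using hnρ
      exact Language.Theory.models_sentence_iff.mp (hn n hn1).2
        (Language.Theory.ModelType.of _ M)


end PaperStmt
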